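/- Fix a distribution D on a finite set X, a concept c, η ∈ [0,1], and integers n, k ≥ 1. Consider any η-nasty-noise strategy against nk samples (for D and c), producing (S, Z, S′), and let σ be a uniformly random permutation of {1,…,nk} independent of (S, Z, S′); let (S′)^{(i)} denote the i-th block of n consecutive coordinates of σ(S′), where σ(S′)_j := S′_{σ(j)}. Then there exists a probability space carrying (S, Z, S′, σ) with this joint law, together with additional random variables S^{(1)},…,S^{(k)} ∈ (X × {−1,1})^n and z_1,…,z_k ∈ ℕ, such that: (1) the marginal law of (S^{(1)},…,S^{(k)}) is that of nk i.i.d. draws from D_c arranged into k blocks of length n; (2) the marginal law of (z_1,…,z_k) is that of k i.i.d. draws from Binomial(n, η); and (3) almost surely, for every i ∈ {1,…,k}, the number of coordinates j ∈ {1,…,n} with S^{(i)}_j ≠ (S′)^{(i)}_j is at most z_i. -/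

import Mathlib

open scoped ENNReal

/-- `Pr_{x ~ D}[h x ≠ c x]`: the error rate of hypothesis `h` w.r.t. the target
concept `c` under the distribution `D`. -/
noncomputable def errD {X : Type*} (D : PMF X) (h c : X → Bool) : ℝ≥0∞ :=
  ∑' x, if h x = c x then 0 else D x

/-- Expectation of `f` under the pmf `p`. -/
noncomputable def pmfExp {α : Type*} (p : PMF α) (f : α → ℝ≥0∞) : ℝ≥0∞ :=
  ∑' a, p a * f a

/-- The distribution `D_c` of a labeled example `(x, c x)` with `x ~ D`. -/
noncomputable def labeled {X : Type*} (D : PMF X) (c : X → Bool) : PMF (X × Bool) :=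
  D.map fun x => (x, c x)

/-- The `Binomial(m, η)` probability of the outcome `j`. -/
noncomputable def binomProb (m : ℕ) (η : ℝ) (j : ℕ) : ℝ≥0∞ :=
  (m.choose j : ℝ≥0∞) * ENNReal.ofReal η ^ j * ENNReal.ofReal (1 - η) ^ (m - j)

/-- An `η`-nasty-noise strategy against `m` samples, for distribution `D` and concept `c`:
a joint distribution `μ` of a triple `(S, Z, S')` such that the marginal law of `S` is that
of `m` i.i.d. draws from `D_c`, the marginal law of `|Z|` is `Binomial(m, η)`, and almost
surely `S'ᵢ = Sᵢ` for every `i ∉ Z`. -/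
structure NastyStrategy {X : Type*} (D : PMF X) (c : X → Bool) (η : ℝ) (m : ℕ) where
  μ : PMF ((Fin m → X × Bool) × Finset (Fin m) × (Fin m → X × Bool))
  marg_clean : ∀ s : Fin m → X × Bool, μ.map (fun t => t.1) s = ∏ i, labeled D c (s i)
  marg_card : ∀ j : ℕ, μ.map (fun t => t.2.1.card) j = binomProb m η j
  consistent : ∀ t ∈ μ.support, ∀ i : Fin m, i ∉ t.2.1 → t.2.2 i = t.1 i

/-- A randomized learner using `m` samples: it maps a labeled data set to a
distribution over hypotheses. -/
abbrev Learner (X : Type*) (m : ℕ) := (Fin m → X × Bool) → PMF (X → Bool)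

/-- `A` learns `𝒞` with expected error at most `ε` over `D` with `η`-nasty noise. -/
def LearnsExpErr {X : Type*} (D : PMF X) (𝒞 : Set (X → Bool)) {m : ℕ}
    (A : Learner X m) (η ε : ℝ) : Prop :=
  ∀ c ∈ 𝒞, ∀ st : NastyStrategy D c η m,
    pmfExp st.μ (fun t => pmfExp (A t.2.2) fun h => errD D h c) ≤ ENNReal.ofReal ε

theorem block_lt {n k : ℕ} (i : Fin k) (j : Fin n) : n * i.val + j.val < n * k :=
  calc n * i.val + j.val < n * i.val + n := Nat.add_lt_add_left j.isLt _
    _ = n * (i.val + 1) := by ring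
    _ ≤ n * k := Nat.mul_le_mul (le_refl n) i.isLt

/-- The `i`-th block of `n` consecutive coordinates of `T : Fin (n*k) → α`. -/
def blockOf {α : Type*} (n k : ℕ) (T : Fin (n * k) → α) (i : Fin k) : Fin n → α :=
  fun j => T ⟨n * i.val + j.val, block_lt i j⟩


/-! ### Auxiliary definitions and lemmas -/

section Aux

open Finset

/-- The equivalence sending `(i, j)` to index `n * i + j` of `Fin (n * k)`. -/
def blockIdx (n k : ℕ) : Fin k × Fin n ≃ Fin (n * k) :=
  finProdFinEquiv.trans (finCongr (Nat.mul_comm k n))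

lemma blockIdx_apply {n k : ℕ} (i : Fin k) (j : Fin n) :
    blockIdx n k (i, j) = ⟨n * i.val + j.val, block_lt i j⟩ := by
  apply Fin.ext
  simp [blockIdx, finProdFinEquiv]
  ring

lemma prod_blocks {M : Type*} [CommMonoid M] {n k : ℕ} (f : Fin (n * k) → M) :
    ∏ l, f l = ∏ i : Fin k, ∏ j : Fin n, f (blockIdx n k (i, j)) := by
  rw [← Equiv.prod_comp (blockIdx n k) f, Fintype.prod_prod_type]

lemma sum_blocks {M : Type*} [AddCommMonoid M] {n k : ℕ} (f : Fin (n * k) → M) :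
    ∑ l, f l = ∑ i : Fin k, ∑ j : Fin n, f (blockIdx n k (i, j)) := by
  rw [← Equiv.sum_comp (blockIdx n k) f, Fintype.sum_prod_type]

lemma card_blocks {n k : ℕ} (T : Finset (Fin (n * k))) :
    T.card = ∑ i : Fin k, (Finset.univ.filter fun j : Fin n => blockIdx n k (i, j) ∈ T).card := by
  have h1 : T.card = ∑ l : Fin (n * k), if l ∈ T then 1 else 0 := by
    rw [← Finset.card_filter]
    congr 1
    ext
    simp
  rw [h1, sum_blocks (fun l => if l ∈ T then 1 else 0)]
  exact Finset.sum_congr rfl fun i _ => (Finset.card_filter _ _).symm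

/-- The permutations `σ` with `σ ⁻¹' Z = T` split into a bijection `T ≃ Z` and a
bijection of the complements. -/
def permSplit {α : Type*} [Fintype α] [DecidableEq α] (Z T : Finset α) :
    {σ : Equiv.Perm α // ∀ x, σ x ∈ Z ↔ x ∈ T} ≃
      (({x // x ∈ T} ≃ {x // x ∈ Z}) × ({x // x ∉ T} ≃ {x // x ∉ Z})) where
  toFun σ := ⟨Equiv.subtypeEquiv σ.1 fun x => (σ.2 x).symm,
              Equiv.subtypeEquiv σ.1 fun x => not_congr (σ.2 x).symm⟩
  invFun fg := ⟨(Equiv.sumCompl (· ∈ T)).symm.trans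
      ((Equiv.sumCongr fg.1 fg.2).trans (Equiv.sumCompl (· ∈ Z))), by
    intro x
    by_cases hx : x ∈ T
    · simp [Equiv.sumCompl_symm_apply_of_pos hx, (fg.1 ⟨x, hx⟩).2, hx]
    · simp [Equiv.sumCompl_symm_apply_of_neg hx, (fg.2 ⟨x, hx⟩).2, hx]⟩
  left_inv := by
    rintro ⟨σ, hσ⟩
    apply Subtype.ext
    apply Equiv.ext
    intro x
    by_cases hx : x ∈ T
    · simp [Equiv.sumCompl_symm_apply_of_pos hx]
    · simp [Equiv.sumCompl_symm_apply_of_neg hx]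
  right_inv := by
    rintro ⟨f, g⟩
    refine Prod.ext ?_ ?_
    · apply Equiv.ext
      rintro ⟨x, hx⟩
      apply Subtype.ext
      simp [Equiv.sumCompl_symm_apply_of_pos hx]
    · apply Equiv.ext
      rintro ⟨x, hx⟩
      apply Subtype.ext
      simp [Equiv.sumCompl_symm_apply_of_neg hx]

lemma card_perm_filter {α : Type*} [Fintype α] [DecidableEq α] (Z T : Finset α) :
    (Finset.univ.filter fun σ : Equiv.Perm α => ∀ x, σ x ∈ Z ↔ x ∈ T).card
      = if T.card = Z.card then Nat.factorial T.card * Nat.factorial (Fintype.card α - T.card) else 0 := by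
  rw [← Fintype.card_subtype]
  split_ifs with h
  · rw [Fintype.card_congr (permSplit Z T), Fintype.card_prod,
      Fintype.card_equiv (Fintype.equivOfCardEq (by simp [h])),
      Fintype.card_equiv (Fintype.equivOfCardEq (by
        simp only [Fintype.card_subtype_compl, Fintype.card_coe, h]))]
    simp [Fintype.card_coe, Fintype.card_subtype_compl]
  · rw [Fintype.card_eq_zero_iff]
    constructor
    rintro ⟨σ, hσ⟩
    apply h
    have hZ : Z = T.image σ := by
      ext y
      simp only [Finset.mem_image]
      constructor
      · intro hy
        exact ⟨σ.symm y, (hσ _).mp (by simpa using hy), by simp⟩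
      · rintro ⟨x, hx, rfl⟩
        exact (hσ x).mpr hx
    rw [hZ, Finset.card_image_of_injective _ σ.injective]

/-- Subsets of `Fin (n * k)` correspond to `k`-tuples of subsets of the blocks. -/
def subsetBlocks (n k : ℕ) : Finset (Fin (n * k)) ≃ (Fin k → Finset (Fin n)) where
  toFun T := fun i => Finset.univ.filter fun j => blockIdx n k (i, j) ∈ T
  invFun f := Finset.univ.filter fun x =>
    ((blockIdx n k).symm x).2 ∈ f ((blockIdx n k).symm x).1
  left_inv T := by
    ext x
    have : ((((blockIdx n k).symm x).1, ((blockIdx n k).symm x).2) : Fin k × Fin n)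
        = (blockIdx n k).symm x := by simp
    simp [this]
  right_inv f := by
    funext i
    ext j
    simp

lemma card_good_subsets {n k : ℕ} (z : Fin k → ℕ) :
    (Finset.univ.filter fun T : Finset (Fin (n * k)) =>
        z = fun i => (Finset.univ.filter fun j : Fin n => blockIdx n k (i, j) ∈ T).card).card
      = ∏ i, n.choose (z i) := by
  rw [← Fintype.card_subtype]
  have e1 : {T : Finset (Fin (n * k)) //
        z = fun i => (Finset.univ.filter fun j : Fin n => blockIdx n k (i, j) ∈ T).card}
      ≃ {f : Fin k → Finset (Fin n) // ∀ i, (f i).card = z i} := by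
    refine (Equiv.subtypeEquiv (subsetBlocks n k) fun T => ?_).trans (Equiv.refl _)
    constructor
    · intro h
      intro i
      exact (congrFun h i).symm
    · intro h
      funext i
      exact (h i).symm
  rw [Fintype.card_congr (e1.trans (Equiv.subtypePiEquivPi (p := fun i A => Finset.card A = z i)))]
  rw [Fintype.card_pi]
  refine Finset.prod_congr rfl fun i _ => ?_
  rw [Fintype.card_finset_len, Fintype.card_fin]

lemma Ncount_eq {n k : ℕ} (Z : Finset (Fin (n * k))) (z : Fin k → ℕ)
    {inst : DecidablePred fun σ : Equiv.Perm (Fin (n * k)) =>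
        z = fun i => (Finset.univ.filter fun j : Fin n => σ (blockIdx n k (i, j)) ∈ Z).card} :
    (@Finset.filter _ _ inst Finset.univ).card
      = if Z.card = ∑ i, z i then
          (∏ i, n.choose (z i)) * (Nat.factorial (∑ i, z i) * Nat.factorial (n * k - ∑ i, z i)) else 0 := by
  have hinst : (@Finset.filter _ _ inst Finset.univ)
      = Finset.univ.filter (fun σ : Equiv.Perm (Fin (n * k)) =>
          z = fun i => (Finset.univ.filter fun j : Fin n => σ (blockIdx n k (i, j)) ∈ Z).card) := by
    congr!
  rw [hinst]
  have hmain :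
      (Finset.univ.filter fun σ : Equiv.Perm (Fin (n * k)) =>
          z = fun i => (Finset.univ.filter fun j : Fin n => σ (blockIdx n k (i, j)) ∈ Z).card).card
        = ∑ T ∈ (Finset.univ.filter fun T : Finset (Fin (n * k)) =>
            z = fun i => (Finset.univ.filter fun j : Fin n => blockIdx n k (i, j) ∈ T).card),
            (Finset.univ.filter fun σ : Equiv.Perm (Fin (n * k)) =>
              ∀ x, σ x ∈ Z ↔ x ∈ T).card := by
    rw [Finset.card_eq_sum_card_fiberwise
      (f := fun σ : Equiv.Perm (Fin (n * k)) => Finset.univ.filter fun x => σ x ∈ Z)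
      (t := Finset.univ.filter fun T : Finset (Fin (n * k)) =>
        z = fun i => (Finset.univ.filter fun j : Fin n => blockIdx n k (i, j) ∈ T).card)
      (fun σ hσ => by
        simp only [Finset.mem_coe, Finset.mem_filter, Finset.mem_univ, true_and] at hσ ⊢
        rw [hσ])]
    refine Finset.sum_congr rfl fun T hT => ?_
    simp only [Finset.mem_filter, Finset.mem_univ, true_and] at hT
    congr 1
    rw [Finset.filter_filter]
    ext σ
    simp only [Finset.mem_filter, Finset.mem_univ, true_and]
    constructor
    · rintro ⟨hPσ, hTσ⟩ x
      rw [← hTσ]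
      simp
    · intro hσ
      have hTσ : (Finset.univ.filter fun x => σ x ∈ Z) = T := by
        ext x
        simp [hσ x]
      refine ⟨?_, hTσ⟩
      rw [hT]
      funext i
      congr 1
      ext j
      simp [hσ]
  rw [hmain]
  have hcard : ∀ T ∈ (Finset.univ.filter fun T : Finset (Fin (n * k)) =>
      z = fun i => (Finset.univ.filter fun j : Fin n => blockIdx n k (i, j) ∈ T).card),
      (Finset.univ.filter fun σ : Equiv.Perm (Fin (n * k)) => ∀ x, σ x ∈ Z ↔ x ∈ T).card
        = if Z.card = ∑ i, z i then
            Nat.factorial (∑ i, z i) * Nat.factorial (n * k - ∑ i, z i) else 0 := by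
    intro T hT
    simp only [Finset.mem_filter, Finset.mem_univ, true_and] at hT
    have hTc : T.card = ∑ i, z i := by
      rw [card_blocks T]
      exact Finset.sum_congr rfl fun i _ => (congrFun hT i).symm
    have h := card_perm_filter Z T
    rw [hTc, Fintype.card_fin] at h
    by_cases hc : Z.card = ∑ i, z i
    · rw [if_pos hc]
      rw [if_pos hc.symm] at h
      convert h using 2 <;> congr!
    · rw [if_neg hc]
      rw [if_neg (fun hh => hc hh.symm)] at h
      convert h using 2 <;> congr!
  rw [Finset.sum_congr rfl hcard, Finset.sum_const, card_good_subsets, smul_eq_mul, mul_ite,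
    mul_zero]


lemma bind_bind_pure_map_apply {Ω₁ Ω₂ Γ Δ : Type*} [DecidableEq Δ]
    (μ : PMF Ω₁) (π : PMF Ω₂) (F : Ω₁ → Ω₂ → Γ) (G : Γ → Δ) (v : Δ) :
    ((μ.bind fun t => π.bind fun σ => PMF.pure (F t σ)).map G) v
      = ∑' t, μ t * ∑' σ, π σ * (if v = G (F t σ) then 1 else 0) := by
  simp only [PMF.map, PMF.bind_bind, PMF.pure_bind, Function.comp, PMF.bind_apply,
    PMF.pure_apply]
  refine tsum_congr fun t => ?_
  congr 1
  refine tsum_congr fun σ => ?_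
  congr!

lemma final_alg (n k : ℕ) (η : ℝ) (z : Fin k → ℕ) :
    (((n * k).factorial : ℝ≥0∞))⁻¹
        * (((∏ i, n.choose (z i)) * ((∑ i, z i).factorial * (n * k - ∑ i, z i).factorial) : ℕ)
          : ℝ≥0∞)
        * binomProb (n * k) η (∑ i, z i) = ∏ i, binomProb n η (z i) := by
  by_cases hz : ∀ i, z i ≤ n
  · have hs0 : ∑ i, z i ≤ n * k := by
      calc ∑ i, z i ≤ ∑ _i : Fin k, n := Finset.sum_le_sum fun i _ => hz i
        _ = n * k := by simp [Finset.sum_const, Nat.mul_comm]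
    have hsub : ∑ i, (n - z i) = n * k - ∑ i, z i := by
      have h1 : ∑ i, ((n - z i) + z i) = ∑ _i : Fin k, n :=
        Finset.sum_congr rfl fun i _ => Nat.sub_add_cancel (hz i)
      rw [Finset.sum_add_distrib] at h1
      simp only [Finset.sum_const, Finset.card_univ, Fintype.card_fin, smul_eq_mul] at h1
      rw [Nat.mul_comm k n] at h1
      omega
    have key : ((n * k).choose (∑ i, z i) : ℝ≥0∞)
        * (((∑ i, z i).factorial * (n * k - ∑ i, z i).factorial : ℕ) : ℝ≥0∞)
        = ((n * k).factorial : ℝ≥0∞) := by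
      rw [← Nat.cast_mul]
      exact_mod_cast congrArg (Nat.cast (R := ℝ≥0∞))
        (by rw [← Nat.mul_assoc]; exact Nat.choose_mul_factorial_mul_factorial hs0)
    have hrhs : ∏ i, binomProb n η (z i)
        = ((∏ i, n.choose (z i) : ℕ) : ℝ≥0∞)
          * (ENNReal.ofReal η ^ (∑ i, z i) * ENNReal.ofReal (1 - η) ^ (n * k - ∑ i, z i)) := by
      rw [← Finset.prod_pow_eq_pow_sum, ← hsub, ← Finset.prod_pow_eq_pow_sum,
        ← Finset.prod_mul_distrib, Nat.cast_prod, ← Finset.prod_mul_distrib]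
      exact Finset.prod_congr rfl fun i _ => by rw [binomProb, mul_assoc]
    rw [hrhs, binomProb]
    have h1 : (((n * k).factorial : ℝ≥0∞))⁻¹ * ((n * k).factorial : ℝ≥0∞) = 1 :=
      ENNReal.inv_mul_cancel (by exact_mod_cast (Nat.factorial_pos _).ne')
        (ENNReal.natCast_ne_top _)
    calc (((n * k).factorial : ℝ≥0∞))⁻¹
          * (((∏ i, n.choose (z i)) * ((∑ i, z i).factorial * (n * k - ∑ i, z i).factorial) : ℕ)
            : ℝ≥0∞)
          * (((n * k).choose (∑ i, z i) : ℝ≥0∞) * ENNReal.ofReal η ^ (∑ i, z i)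
            * ENNReal.ofReal (1 - η) ^ (n * k - ∑ i, z i))
        = ((((n * k).factorial : ℝ≥0∞))⁻¹
            * (((n * k).choose (∑ i, z i) : ℝ≥0∞)
              * (((∑ i, z i).factorial * (n * k - ∑ i, z i).factorial : ℕ) : ℝ≥0∞)))
          * (((∏ i, n.choose (z i) : ℕ) : ℝ≥0∞)
            * (ENNReal.ofReal η ^ (∑ i, z i)
              * ENNReal.ofReal (1 - η) ^ (n * k - ∑ i, z i))) := by
          push_cast
          ring
      _ = ((∏ i, n.choose (z i) : ℕ) : ℝ≥0∞)
          * (ENNReal.ofReal η ^ (∑ i, z i) * ENNReal.ofReal (1 - η) ^ (n * k - ∑ i, z i)) := by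
          rw [key, h1, one_mul]
  · push_neg at hz
    obtain ⟨i0, hi0⟩ := hz
    have hc0 : n.choose (z i0) = 0 := Nat.choose_eq_zero_of_lt hi0
    have h1 : (∏ i, n.choose (z i)) = 0 := Finset.prod_eq_zero (Finset.mem_univ i0) hc0
    have h2 : (∏ i, binomProb n η (z i)) = 0 :=
      Finset.prod_eq_zero (Finset.mem_univ i0) (by simp [binomProb, hc0])
    rw [h1, h2]
    simp


end Aux

set_option maxHeartbeats 2000000 in
/-- Given any `η`-nasty-noise strategy against `n*k` samples producing
`(S, Z, S')`, together with an independent uniformly random permutation `σ` of the `n*k`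
coordinates, there is a probability space (a joint pmf `ν`) carrying `(S, Z, S', σ)` with
this joint law together with extra random variables `S⁽¹⁾, …, S⁽ᵏ⁾` and `z₁, …, z_k`
such that: (1) `(S⁽¹⁾, …, S⁽ᵏ⁾)` is distributed as `n*k` i.i.d. draws from `D_c` arranged
into `k` blocks of length `n`; (2) `(z₁, …, z_k)` is distributed as `k` i.i.d. draws from
`Binomial(n, η)`; (3) almost surely, for every `i`, the number of coordinates `j` with
`S⁽ⁱ⁾ⱼ ≠ (S')⁽ⁱ⁾ⱼ` is at most `zᵢ`, where `(S')⁽ⁱ⁾` is the `i`-th block of `σ(S')`. -/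
theorem group_dists
    {X : Type*} [Fintype X] [DecidableEq X] [Nonempty X]
    (D : PMF X) (c : X → Bool) (η : ℝ) (hη0 : 0 ≤ η) (hη1 : η ≤ 1)
    (n k : ℕ) (hn : 0 < n) (hk : 0 < k)
    (st : NastyStrategy D c η (n * k)) :
    ∃ ν : PMF (((Fin (n * k) → X × Bool) × Finset (Fin (n * k)) × (Fin (n * k) → X × Bool))
        × Equiv.Perm (Fin (n * k)) × (Fin k → Fin n → X × Bool) × (Fin k → ℕ)),
      (∀ q : ((Fin (n * k) → X × Bool) × Finset (Fin (n * k)) × (Fin (n * k) → X × Bool))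
            × Equiv.Perm (Fin (n * k)),
          ν.map (fun r => (r.1, r.2.1)) q
            = st.μ q.1 * PMF.uniformOfFintype (Equiv.Perm (Fin (n * k))) q.2) ∧
      (∀ s : Fin k → Fin n → X × Bool,
          ν.map (fun r => r.2.2.1) s = ∏ i, ∏ j, labeled D c (s i j)) ∧
      (∀ z : Fin k → ℕ, ν.map (fun r => r.2.2.2) z = ∏ i, binomProb n η (z i)) ∧
      (∀ r ∈ ν.support, ∀ i : Fin k,
          (Finset.univ.filter fun j : Fin n =>
              r.2.2.1 i j ≠ blockOf n k (fun l => r.1.2.2 (r.2.1 l)) i j).card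
            ≤ r.2.2.2 i) := by
  refine ⟨st.μ.bind fun t => (PMF.uniformOfFintype (Equiv.Perm (Fin (n * k)))).bind fun σ =>
      PMF.pure (t, σ, (fun i j => t.1 (σ (blockIdx n k (i, j)))),
        (fun i => (Finset.univ.filter fun j : Fin n =>
          σ (blockIdx n k (i, j)) ∈ t.2.1).card)), ?_, ?_, ?_, ?_⟩
  · -- (1) marginal of ((S, Z, S'), σ)
    intro q
    letI : DecidableEq (((Fin (n * k) → X × Bool) × Finset (Fin (n * k)) ×
        (Fin (n * k) → X × Bool)) × Equiv.Perm (Fin (n * k))) := Classical.decEq _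
    rw [bind_bind_pure_map_apply]
    simp only [tsum_fintype]
    rw [Finset.sum_eq_single q.1]
    · congr 1
      rw [Finset.sum_eq_single q.2]
      · simp
      · intro b _ hb
        have hb' : q.2 ≠ b := fun h => hb h.symm
        simp [Prod.ext_iff, hb']
      · intro h
        exact absurd (Finset.mem_univ _) h
    · intro b _ hb
      have hb' : q.1 ≠ b := fun h => hb h.symm
      simp [Prod.ext_iff, hb']
    · intro h
      exact absurd (Finset.mem_univ _) h
  · -- (2) clean blocks are i.i.d.
    intro s
    rw [bind_bind_pure_map_apply]
    simp only [tsum_fintype]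
    set flat : Fin (n * k) → X × Bool :=
      fun l => s ((blockIdx n k).symm l).1 ((blockIdx n k).symm l).2 with hflat
    have hcond : ∀ (t : (Fin (n * k) → X × Bool) × Finset (Fin (n * k)) ×
        (Fin (n * k) → X × Bool)) (σ : Equiv.Perm (Fin (n * k))),
        (s = fun i j => t.1 (σ (blockIdx n k (i, j))))
          ↔ ((fun l => flat (σ.symm l)) = t.1) := by
      intro t σ
      constructor
      · intro h
        funext l
        have h2 := congrFun (congrFun h ((blockIdx n k).symm (σ.symm l)).1)
          ((blockIdx n k).symm (σ.symm l)).2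
        simpa [flat] using h2
      · intro h
        funext i j
        rw [← h]
        simp [flat]
    have step1 : ∀ σ : Equiv.Perm (Fin (n * k)),
        (∑ t : (Fin (n * k) → X × Bool) × Finset (Fin (n * k)) × (Fin (n * k) → X × Bool),
          st.μ t * (PMF.uniformOfFintype (Equiv.Perm (Fin (n * k))) σ *
            (if s = fun i j => t.1 (σ (blockIdx n k (i, j))) then 1 else 0)))
          = PMF.uniformOfFintype (Equiv.Perm (Fin (n * k))) σ
            * ∏ i, ∏ j, labeled D c (s i j) := by
      intro σ
      have hterm : ∀ t : (Fin (n * k) → X × Bool) × Finset (Fin (n * k)) ×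
          (Fin (n * k) → X × Bool),
          st.μ t * (PMF.uniformOfFintype (Equiv.Perm (Fin (n * k))) σ *
            (if s = fun i j => t.1 (σ (blockIdx n k (i, j))) then 1 else 0))
            = PMF.uniformOfFintype (Equiv.Perm (Fin (n * k))) σ *
              (if (fun l => flat (σ.symm l)) = t.1 then st.μ t else 0) := by
        intro t
        by_cases h : s = fun i j => t.1 (σ (blockIdx n k (i, j)))
        · rw [if_pos h, if_pos ((hcond t σ).mp h)]
          ring
        · rw [if_neg h, if_neg (fun hh => h ((hcond t σ).mpr hh))]
          ring
      rw [Finset.sum_congr rfl fun t _ => hterm t, ← Finset.mul_sum]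
      congr 1
      have hmap := st.marg_clean (fun l => flat (σ.symm l))
      rw [PMF.map_apply, tsum_fintype] at hmap
      have hmap2 : (∑ b : (Fin (n * k) → X × Bool) × Finset (Fin (n * k)) ×
          (Fin (n * k) → X × Bool),
            if (fun l => flat (σ.symm l)) = b.1 then st.μ b else 0)
          = ∏ l, labeled D c (flat (σ.symm l)) := by
        rw [← hmap]
        exact Finset.sum_congr rfl fun b _ => by congr!
      rw [hmap2, Equiv.prod_comp σ.symm (fun l => labeled D c (flat l)),
        prod_blocks (fun l => labeled D c (flat l))]
      refine Finset.prod_congr rfl fun i _ => Finset.prod_congr rfl fun j _ => ?_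
      simp [flat]
    simp only [Finset.mul_sum]
    rw [Finset.sum_comm]
    refine Eq.trans (Finset.sum_congr rfl fun σ _ => step1 σ) ?_
    rw [← Finset.sum_mul]
    have hone : (∑ σ : Equiv.Perm (Fin (n * k)),
        PMF.uniformOfFintype (Equiv.Perm (Fin (n * k))) σ) = 1 := by
      rw [← tsum_fintype (L := SummationFilter.unconditional _)]
      exact PMF.tsum_coe _
    rw [hone, one_mul]
  · -- (3) block noise counts are i.i.d. binomial
    intro z
    rw [bind_bind_pure_map_apply]
    simp only [tsum_fintype]
    have hu : ∀ σ : Equiv.Perm (Fin (n * k)),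
        PMF.uniformOfFintype (Equiv.Perm (Fin (n * k))) σ
          = (((n * k).factorial : ℝ≥0∞))⁻¹ := by
      intro σ
      rw [PMF.uniformOfFintype_apply]
      congr 1
      simp [Fintype.card_perm, Fintype.card_fin]
    have hinner : ∀ t : (Fin (n * k) → X × Bool) × Finset (Fin (n * k)) ×
        (Fin (n * k) → X × Bool),
        (∑ σ : Equiv.Perm (Fin (n * k)),
          PMF.uniformOfFintype (Equiv.Perm (Fin (n * k))) σ *
            (if z = (fun i => (Finset.univ.filter fun j : Fin n =>
                σ (blockIdx n k (i, j)) ∈ t.2.1).card) then 1 else 0))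
          = (((n * k).factorial : ℝ≥0∞))⁻¹
            * (((if t.2.1.card = ∑ i, z i then
                (∏ i, n.choose (z i)) * ((∑ i, z i).factorial * (n * k - ∑ i, z i).factorial)
                else 0) : ℕ) : ℝ≥0∞) := by
      intro t
      simp only [hu]
      rw [← Finset.mul_sum]
      congr 1
      rw [Finset.sum_boole, Ncount_eq t.2.1 z]
    have hterm2 : ∀ t : (Fin (n * k) → X × Bool) × Finset (Fin (n * k)) ×
        (Fin (n * k) → X × Bool),
        st.μ t * ((((n * k).factorial : ℝ≥0∞))⁻¹
            * (((if t.2.1.card = ∑ i, z i then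
                (∏ i, n.choose (z i)) * ((∑ i, z i).factorial * (n * k - ∑ i, z i).factorial)
                else 0) : ℕ) : ℝ≥0∞))
          = ((((n * k).factorial : ℝ≥0∞))⁻¹
              * (((∏ i, n.choose (z i)) * ((∑ i, z i).factorial * (n * k - ∑ i, z i).factorial)
                : ℕ) : ℝ≥0∞))
            * (if (∑ i, z i) = t.2.1.card then st.μ t else 0) := by
      intro t
      by_cases h : t.2.1.card = ∑ i, z i
      · rw [if_pos h, if_pos h.symm]
        ring
      · rw [if_neg h, if_neg (fun hh => h hh.symm)]
        simp
    calc (∑ t : (Fin (n * k) → X × Bool) × Finset (Fin (n * k)) × (Fin (n * k) → X × Bool),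
          st.μ t * ∑ σ : Equiv.Perm (Fin (n * k)),
            PMF.uniformOfFintype (Equiv.Perm (Fin (n * k))) σ *
              (if z = (fun i => (Finset.univ.filter fun j : Fin n =>
                  σ (blockIdx n k (i, j)) ∈ t.2.1).card) then 1 else 0))
        = ∑ t : (Fin (n * k) → X × Bool) × Finset (Fin (n * k)) × (Fin (n * k) → X × Bool),
            ((((n * k).factorial : ℝ≥0∞))⁻¹
              * (((∏ i, n.choose (z i)) * ((∑ i, z i).factorial * (n * k - ∑ i, z i).factorial)
                : ℕ) : ℝ≥0∞))
            * (if (∑ i, z i) = t.2.1.card then st.μ t else 0) :=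
          Finset.sum_congr rfl fun t _ => by rw [hinner t]; exact hterm2 t
      _ = ((((n * k).factorial : ℝ≥0∞))⁻¹
              * (((∏ i, n.choose (z i)) * ((∑ i, z i).factorial * (n * k - ∑ i, z i).factorial)
                : ℕ) : ℝ≥0∞))
            * ∑ t : (Fin (n * k) → X × Bool) × Finset (Fin (n * k)) × (Fin (n * k) → X × Bool),
              (if (∑ i, z i) = t.2.1.card then st.μ t else 0) := by
          rw [Finset.mul_sum]
      _ = ((((n * k).factorial : ℝ≥0∞))⁻¹
              * (((∏ i, n.choose (z i)) * ((∑ i, z i).factorial * (n * k - ∑ i, z i).factorial)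
                : ℕ) : ℝ≥0∞)) * binomProb (n * k) η (∑ i, z i) := by
          have h := st.marg_card (∑ i, z i)
          rw [PMF.map_apply, tsum_fintype] at h
          have h2 : (∑ t : (Fin (n * k) → X × Bool) × Finset (Fin (n * k)) ×
              (Fin (n * k) → X × Bool), (if (∑ i, z i) = t.2.1.card then st.μ t else 0))
              = binomProb (n * k) η (∑ i, z i) := by
            rw [← h]
            exact Finset.sum_congr rfl fun t _ => by congr!
          rw [h2]
      _ = ∏ i, binomProb n η (z i) := final_alg n k η z
  · -- (4) a.s. domination
    intro r hr i
    rw [PMF.mem_support_bind_iff] at hr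
    obtain ⟨t, ht, hr⟩ := hr
    rw [PMF.mem_support_bind_iff] at hr
    obtain ⟨σ, hσ, hr⟩ := hr
    rw [PMF.mem_support_pure_iff] at hr
    subst hr
    dsimp only
    apply Finset.card_le_card
    intro j hj
    simp only [Finset.mem_filter, Finset.mem_univ, true_and] at hj ⊢
    by_contra hmem
    apply hj
    have hc := st.consistent t ht (σ (blockIdx n k (i, j))) hmem
    show t.1 (σ (blockIdx n k (i, j))) = blockOf n k (fun l => t.2.2 (σ l)) i j
    rw [blockOf, ← blockIdx_apply i j]
    exact hc.symm
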